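/- Let Λ be a chain transitive compact invariant set of a flow with the shadowing property, and let σ ∈ Λ be a hyperbolic singularity such that Λ is nontrivial. Then for any neighborhood U of Λ there is a homoclinic point x ∈ (W^s(σ) ∩ W^u(σ))∖{σ} whose full orbit is contained in U. Moreover if Λ has the intrinsic shadowing property then x can be chosen in Λ. -/

import Mathlib

/- Common setting: the compact manifold is modelled by a finite-dimensional real
inner product space `E`; a `FlowPkg` packages a `C¹` vector field `X`, its flow `φ`,
the tangent flow `Dφ` and the derivative `DX` of the vector field. -/

open scoped RealInnerProductSpace

section Defs

variable (E : Type*) [NormedAddCommGroup E] [InnerProductSpace ℝ E] [FiniteDimensional ℝ E]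

structure FlowPkg where
  X : E → E
  DX : E → E →L[ℝ] E
  φ : ℝ → E → E
  Dφ : ℝ → E → E →L[ℝ] E
  contX : Continuous X
  contφ : Continuous fun p : ℝ × E => φ p.1 p.2
  flow_zero : ∀ x, φ 0 x = x
  flow_add : ∀ s t x, φ (s + t) x = φ s (φ t x)
  deriv_time : ∀ t x, HasDerivAt (fun s => φ s x) (X (φ t x)) t
  deriv_space : ∀ t x, HasFDerivAt (φ t) (Dφ t x) x
  deriv_X : ∀ x, HasFDerivAt X (DX x) x

end Defs

variable {E : Type*} [NormedAddCommGroup E] [InnerProductSpace ℝ E] [FiniteDimensional ℝ E]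

/-- normalization of a vector -/
noncomputable def nrm (v : E) : E := ‖v‖⁻¹ • v

/-- area of the parallelogram spanned by two vectors (norm of `u ∧ v`) -/
noncomputable def area (u v : E) : ℝ := Real.sqrt (‖u‖ ^ 2 * ‖v‖ ^ 2 - ⟪u, v⟫ ^ 2)

namespace FlowPkg

variable (P : FlowPkg E)

def Invariant (Λ : Set E) : Prop := ∀ t : ℝ, ∀ x ∈ Λ, P.φ t x ∈ Λ

def orbit (x : E) : Set E := Set.range fun t : ℝ => P.φ t x

/-- `Λ` is nontrivial if it is not a single orbit -/
def NontrivialSet (Λ : Set E) : Prop := ¬ ∃ x : E, Λ = P.orbit x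

/-- a finite `δ`-pseudo orbit `(x i, T i)`, `0 ≤ i ≤ n`, all times `≥ 1` -/
def IsPseudoOrbit (δ : ℝ) (n : ℕ) (x : ℕ → E) (T : ℕ → ℝ) : Prop :=
  (∀ i < n, 1 ≤ T i) ∧ ∀ i < n, dist (P.φ (T i) (x i)) (x (i + 1)) < δ

/-- a `δ`-pseudo orbit from `a` to `b` -/
def ChainFrom (a b : E) : Prop :=
  ∀ δ > (0:ℝ), ∃ n : ℕ, ∃ x : ℕ → E, ∃ T : ℕ → ℝ,
    0 < n ∧ P.IsPseudoOrbit δ n x T ∧ x 0 = a ∧ x n = b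

def ChainTransitive (Λ : Set E) : Prop :=
  ∀ a ∈ Λ, ∀ b ∈ Λ, ∀ δ > (0:ℝ), ∃ n : ℕ, ∃ x : ℕ → E, ∃ T : ℕ → ℝ,
    0 < n ∧ P.IsPseudoOrbit δ n x T ∧ (∀ i ≤ n, x i ∈ Λ) ∧ x 0 = a ∧ x n = b

/-- the chain recurrent set -/
def CR : Set E := {x | P.ChainFrom x x}

/-- the chain class of a point -/
def ChainClass (σ : E) : Set E := {x | P.ChainFrom σ x ∧ P.ChainFrom x σ}

/-- the orbit of `z` `ε`-shadows (with an increasing reparametrization `θ`) the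
bi-infinite pseudo orbit `(x i)` with accumulated times `s i`. -/
def Shadows (ε : ℝ) (x : ℤ → E) (s : ℤ → ℝ) (z : E) : Prop :=
  ∃ θ : ℝ → ℝ, StrictMono θ ∧ Function.Surjective θ ∧
    ∀ i : ℤ, ∀ t ∈ Set.Icc (s i) (s (i + 1)),
      dist (P.φ (t - s i) (x i)) (P.φ (θ t) z) < ε

/-- the shadowing property on `Λ` -/
def ShadowingOn (Λ : Set E) : Prop :=
  ∀ ε > (0:ℝ), ∃ δ > (0:ℝ), ∀ (x : ℤ → E) (T s : ℤ → ℝ),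
    (∀ i, x i ∈ Λ) → (∀ i, 1 ≤ T i) →
    (∀ i, dist (P.φ (T i) (x i)) (x (i + 1)) < δ) →
    s 0 = 0 → (∀ i, s (i + 1) = s i + T i) →
    ∃ z : E, P.Shadows ε x s z

/-- the intrinsic shadowing property on `Λ`: the shadowing point lies in `Λ` -/
def IntrinsicShadowingOn (Λ : Set E) : Prop :=
  ∀ ε > (0:ℝ), ∃ δ > (0:ℝ), ∀ (x : ℤ → E) (T s : ℤ → ℝ),
    (∀ i, x i ∈ Λ) → (∀ i, 1 ≤ T i) →
    (∀ i, dist (P.φ (T i) (x i)) (x (i + 1)) < δ) →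
    s 0 = 0 → (∀ i, s (i + 1) = s i + T i) →
    ∃ z ∈ Λ, P.Shadows ε x s z

/-- the stable set (stable manifold) of `σ` -/
def Ws (σ : E) : Set E :=
  {x | Filter.Tendsto (fun t : ℝ => P.φ t x) Filter.atTop (nhds σ)}

/-- the unstable set (unstable manifold) of `σ` -/
def Wu (σ : E) : Set E :=
  {x | Filter.Tendsto (fun t : ℝ => P.φ t x) Filter.atBot (nhds σ)}

/-- the strong stable manifold of a singularity `σ`, of contraction rates `< rate`:
points converging to `σ` strictly faster than `e^{rate·t}`. -/
def WssMan (σ : E) (rate : ℝ) : Set E :=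
  {x | ∃ K > (0:ℝ), ∃ r < rate, ∀ t ≥ (0:ℝ), dist (P.φ t x) σ ≤ K * Real.exp (r * t)}

/-- the nonwandering set -/
def NonWandering : Set E :=
  {x | ∀ U ∈ nhds x, ∀ T : ℝ, ∃ t ≥ T, ((P.φ t '' U) ∩ U).Nonempty}

/-- the linear Poincaré flow along the orbit of a regular point `x` -/
noncomputable def psiL (t : ℝ) (x : E) (v : E) : E :=
  P.Dφ t x v - ⟪P.Dφ t x v, nrm (P.X (P.φ t x))⟫ • nrm (P.X (P.φ t x))

/-- the flow induced on the unit sphere bundle by the tangent flow -/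
noncomputable def phiSharp (t : ℝ) (p : E × E) : E × E :=
  (P.φ t p.1, nrm (P.Dφ t p.1 p.2))

/-- the extended linear Poincaré flow on the normal bundle over the sphere bundle -/
noncomputable def psiE (t : ℝ) (p : E × E) (v : E) : E :=
  P.Dφ t p.1 v - ⟪P.Dφ t p.1 v, nrm (P.Dφ t p.1 p.2)⟫ • nrm (P.Dφ t p.1 p.2)

end FlowPkg

/-- a hyperbolic singularity, with its hyperbolic splitting `Es ⊕ Eu` -/
structure HypSing (P : FlowPkg E) (σ : E) where
  Es : Submodule ℝ E
  Eu : Submodule ℝ E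
  zero : P.X σ = 0
  compl : IsCompl Es Eu
  invs : ∀ t : ℝ, ∀ v ∈ Es, P.Dφ t σ v ∈ Es
  invu : ∀ t : ℝ, ∀ v ∈ Eu, P.Dφ t σ v ∈ Eu
  C : ℝ
  lam : ℝ
  hC : 1 ≤ C
  hlam : 0 < lam
  contr : ∀ t ≥ (0:ℝ), ∀ v ∈ Es, ‖P.Dφ t σ v‖ ≤ C * Real.exp (-lam * t) * ‖v‖
  expand : ∀ t ≥ (0:ℝ), ∀ v ∈ Eu, ‖P.Dφ (-t) σ v‖ ≤ C * Real.exp (-lam * t) * ‖v‖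

/-- a hyperbolic periodic orbit through `p` of period `T` -/
structure HypPer (P : FlowPkg E) (p : E) (T : ℝ) where
  hT : 0 < T
  per : P.φ T p = p
  reg : P.X p ≠ 0
  Es : Submodule ℝ E
  Eu : Submodule ℝ E
  compl : Es ⊔ Submodule.span ℝ {P.X p} ⊔ Eu = ⊤
  indep1 : Es ⊓ (Submodule.span ℝ {P.X p} ⊔ Eu) = ⊥
  indep2 : Submodule.span ℝ {P.X p} ⊓ Eu = ⊥
  invs : ∀ v ∈ Es, P.Dφ T p v ∈ Es
  invu : ∀ v ∈ Eu, P.Dφ T p v ∈ Eu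
  C : ℝ
  lam : ℝ
  hC : 1 ≤ C
  hlam : 0 < lam
  contr : ∀ n : ℕ, ∀ v ∈ Es, ‖P.Dφ (n * T) p v‖ ≤ C * Real.exp (-lam * n) * ‖v‖
  expand : ∀ n : ℕ, ∀ v ∈ Eu, ‖P.Dφ (-(n * T)) p v‖ ≤ C * Real.exp (-lam * n) * ‖v‖

/-- positively singular hyperbolic set: dominated splitting `Ess ⊕ Ecu` of the
tangent bundle over `Λ`, `Ess` contracting, `Ecu` area-expanding, all
singularities hyperbolic. -/
structure PosSingHyp (P : FlowPkg E) (Λ : Set E) where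
  Ess : E → Submodule ℝ E
  Ecu : E → Submodule ℝ E
  compl : ∀ x ∈ Λ, IsCompl (Ess x) (Ecu x)
  invs : ∀ t : ℝ, ∀ x ∈ Λ, ∀ v ∈ Ess x, P.Dφ t x v ∈ Ess (P.φ t x)
  invu : ∀ t : ℝ, ∀ x ∈ Λ, ∀ v ∈ Ecu x, P.Dφ t x v ∈ Ecu (P.φ t x)
  C : ℝ
  lam : ℝ
  hC : 1 < C
  hlam : 0 < lam
  dom : ∀ t ≥ (0:ℝ), ∀ x ∈ Λ, ∀ u ∈ Ess x, ∀ v ∈ Ecu (P.φ t x),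
    ‖P.Dφ t x u‖ * ‖P.Dφ (-t) (P.φ t x) v‖ ≤ C * Real.exp (-lam * t) * (‖u‖ * ‖v‖)
  contr : ∀ t ≥ (0:ℝ), ∀ x ∈ Λ, ∀ v ∈ Ess x,
    ‖P.Dφ t x v‖ ≤ C * Real.exp (-lam * t) * ‖v‖
  area_exp : ∀ t ≥ (0:ℝ), ∀ x ∈ Λ, ∀ u ∈ Ecu x, ∀ v ∈ Ecu x,
    area (P.Dφ (-t) x u) (P.Dφ (-t) x v) ≤ C * Real.exp (-lam * t) * area u v
  singHyp : ∀ σ ∈ Λ, P.X σ = 0 → Nonempty (HypSing P σ)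

/-- negatively singular hyperbolic set (positively singular hyperbolic for `-X`) -/
structure NegSingHyp (P : FlowPkg E) (Λ : Set E) where
  Euu : E → Submodule ℝ E
  Ecs : E → Submodule ℝ E
  compl : ∀ x ∈ Λ, IsCompl (Euu x) (Ecs x)
  invs : ∀ t : ℝ, ∀ x ∈ Λ, ∀ v ∈ Euu x, P.Dφ t x v ∈ Euu (P.φ t x)
  invu : ∀ t : ℝ, ∀ x ∈ Λ, ∀ v ∈ Ecs x, P.Dφ t x v ∈ Ecs (P.φ t x)
  C : ℝ
  lam : ℝ
  hC : 1 < C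
  hlam : 0 < lam
  dom : ∀ t ≥ (0:ℝ), ∀ x ∈ Λ, ∀ u ∈ Euu x, ∀ v ∈ Ecs (P.φ (-t) x),
    ‖P.Dφ (-t) x u‖ * ‖P.Dφ t (P.φ (-t) x) v‖ ≤ C * Real.exp (-lam * t) * (‖u‖ * ‖v‖)
  contr : ∀ t ≥ (0:ℝ), ∀ x ∈ Λ, ∀ v ∈ Euu x,
    ‖P.Dφ (-t) x v‖ ≤ C * Real.exp (-lam * t) * ‖v‖
  area_exp : ∀ t ≥ (0:ℝ), ∀ x ∈ Λ, ∀ u ∈ Ecs x, ∀ v ∈ Ecs x,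
    area (P.Dφ t x u) (P.Dφ t x v) ≤ C * Real.exp (-lam * t) * area u v
  singHyp : ∀ σ ∈ Λ, P.X σ = 0 → Nonempty (HypSing P σ)

/-- singular hyperbolic: positively singular hyperbolic for `X` or for `-X` -/
def SingularHyperbolicOn (P : FlowPkg E) (Λ : Set E) : Prop :=
  Nonempty (PosSingHyp P Λ) ∨ Nonempty (NegSingHyp P Λ)

/-- a hyperbolic set: splitting `Es ⊕ ⟨X⟩ ⊕ Eu` with `Es` contracting and `Eu` expanding -/
structure HyperbolicSet (P : FlowPkg E) (Λ : Set E) where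
  Es : E → Submodule ℝ E
  Eu : E → Submodule ℝ E
  compl : ∀ x ∈ Λ, Es x ⊔ Submodule.span ℝ {P.X x} ⊔ Eu x = ⊤
  indep1 : ∀ x ∈ Λ, Es x ⊓ (Submodule.span ℝ {P.X x} ⊔ Eu x) = ⊥
  indep2 : ∀ x ∈ Λ, Submodule.span ℝ {P.X x} ⊓ Eu x = ⊥
  invs : ∀ t : ℝ, ∀ x ∈ Λ, ∀ v ∈ Es x, P.Dφ t x v ∈ Es (P.φ t x)
  invu : ∀ t : ℝ, ∀ x ∈ Λ, ∀ v ∈ Eu x, P.Dφ t x v ∈ Eu (P.φ t x)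
  C : ℝ
  lam : ℝ
  hC : 1 ≤ C
  hlam : 0 < lam
  contr : ∀ t ≥ (0:ℝ), ∀ x ∈ Λ, ∀ v ∈ Es x,
    ‖P.Dφ t x v‖ ≤ C * Real.exp (-lam * t) * ‖v‖
  expand : ∀ t ≥ (0:ℝ), ∀ x ∈ Λ, ∀ v ∈ Eu x,
    ‖P.Dφ (-t) x v‖ ≤ C * Real.exp (-lam * t) * ‖v‖

/-- `C¹` closeness of two vector fields -/
def C1Close (P Q : FlowPkg E) (ε : ℝ) : Prop :=
  ∀ x : E, ‖Q.X x - P.X x‖ + ‖Q.DX x - P.DX x‖ < ε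

/-- a star vector field: all critical elements of all `C¹`-nearby vector fields
are hyperbolic -/
def FlowPkg.Star (P : FlowPkg E) : Prop :=
  ∃ ε > (0:ℝ), ∀ Q : FlowPkg E, C1Close P Q ε →
    (∀ σ : E, Q.X σ = 0 → Nonempty (HypSing Q σ)) ∧
    (∀ p : E, ∀ T : ℝ, 0 < T → Q.φ T p = p → Q.X p ≠ 0 → Nonempty (HypPer Q p T))

/-- a preperiodic point: accumulated by periodic points of `C¹`-nearby vector fields -/
def FlowPkg.PreperiodicPt (P : FlowPkg E) (x : E) : Prop :=
  ∀ ε > (0:ℝ), ∃ Q : FlowPkg E, C1Close P Q ε ∧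
    ∃ p : E, ∃ T : ℝ, 0 < T ∧ Q.φ T p = p ∧ Q.X p ≠ 0 ∧ dist p x < ε

/-- Axiom A: the nonwandering set is hyperbolic and is the closure of the set of
critical elements -/
def FlowPkg.AxiomA (P : FlowPkg E) : Prop :=
  Nonempty (HyperbolicSet P P.NonWandering) ∧
  P.NonWandering =
    closure ({σ : E | P.X σ = 0} ∪ {p : E | ∃ T > (0:ℝ), P.φ T p = p ∧ P.X p ≠ 0})

/-- the no-cycle condition, formulated (as is equivalent for Axiom A flows) as the
coincidence of the chain recurrent set with the nonwandering set -/
def FlowPkg.NoCycle (P : FlowPkg E) : Prop := P.CR = P.NonWandering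

/-- a continuous family of local strong stable disks over `Λ`, invariant and
uniformly contracted at time `T` -/
structure StrongStableFamily (P : FlowPkg E) (Λ : Set E) (T η : ℝ) where
  hT : 0 < T
  hη0 : 0 < η
  hη1 : η < 1
  Wloc : E → Set E
  mem_self : ∀ x ∈ Λ, x ∈ Wloc x
  inv : ∀ x ∈ Λ, P.φ T '' Wloc x ⊆ Wloc (P.φ T x)
  contr : ∀ x ∈ Λ, ∀ y ∈ Wloc x, dist (P.φ T y) (P.φ T x) ≤ η * dist y x

/-- the global strong stable manifold through `x` -/
def StrongStableFamily.Wss {P : FlowPkg E} {Λ : Set E} {T η : ℝ}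
    (F : StrongStableFamily P Λ T η) (x : E) : Set E :=
  ⋃ n : ℕ, P.φ (-(((n : ℝ) + 1) * T)) '' F.Wloc (P.φ (((n : ℝ) + 1) * T) x)

/-- a positively Lorenz-like hyperbolic singularity: splitting `Ess ⊕ Ec ⊕ Eu`
with `dim Ec = 1`, rates `lamss < lams < 0 < lamu` and positive saddle value
`lams + lamu > 0` -/
structure PosLorenzLike (P : FlowPkg E) (σ : E) where
  zero : P.X σ = 0
  Ess : Submodule ℝ E
  Ec : Submodule ℝ E
  Eu : Submodule ℝ E
  dimc : Module.finrank ℝ Ec = 1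
  compl : Ess ⊔ Ec ⊔ Eu = ⊤
  indep1 : Ess ⊓ (Ec ⊔ Eu) = ⊥
  indep2 : Ec ⊓ Eu = ⊥
  invss : ∀ t : ℝ, ∀ v ∈ Ess, P.Dφ t σ v ∈ Ess
  invc : ∀ t : ℝ, ∀ v ∈ Ec, P.Dφ t σ v ∈ Ec
  invu : ∀ t : ℝ, ∀ v ∈ Eu, P.Dφ t σ v ∈ Eu
  C : ℝ
  lamss : ℝ
  lams : ℝ
  lamu : ℝ
  hC : 1 ≤ C
  hss : lamss < lams
  hs : lams < 0
  hu : 0 < lamu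
  saddle : 0 < lams + lamu
  contr_ss : ∀ t ≥ (0:ℝ), ∀ v ∈ Ess, ‖P.Dφ t σ v‖ ≤ C * Real.exp (lamss * t) * ‖v‖
  contr_c : ∀ t ≥ (0:ℝ), ∀ v ∈ Ec, ‖P.Dφ t σ v‖ ≤ C * Real.exp (lams * t) * ‖v‖
  lower_c : ∀ t ≥ (0:ℝ), ∀ v ∈ Ec, ‖v‖ ≤ C * Real.exp (-lams * t) * ‖P.Dφ t σ v‖
  expand_u : ∀ t ≥ (0:ℝ), ∀ v ∈ Eu, ‖P.Dφ (-t) σ v‖ ≤ C * Real.exp (-lamu * t) * ‖v‖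

/-- multisingular hyperbolicity (Bonatti–da Luz): dominated splitting of the
normal bundle over the compact lifted set `B ⊂ SM` for the extended linear
Poincaré flow, with reparametrizing cocycles `h σ` making the two subbundles
uniformly contracted/expanded -/
structure MultiSingHyp (P : FlowPkg E) (Λ : Set E) where
  singHyp : ∀ σ ∈ Λ, P.X σ = 0 → Nonempty (HypSing P σ)
  B : Set (E × E)
  hBcompact : IsCompact B
  hBunit : ∀ p ∈ B, ‖p.2‖ = 1
  hBinv : ∀ t : ℝ, ∀ p ∈ B, P.phiSharp t p ∈ B
  hBflow : ∀ x ∈ Λ, P.X x ≠ 0 → (x, nrm (P.X x)) ∈ B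
  hBbase : ∀ p ∈ B, p.1 ∈ Λ
  Δs : E × E → Submodule ℝ E
  Δu : E × E → Submodule ℝ E
  perp : ∀ p ∈ B, (∀ v ∈ Δs p, ⟪v, p.2⟫ = 0) ∧ (∀ v ∈ Δu p, ⟪v, p.2⟫ = 0)
  span : ∀ p ∈ B, Δs p ⊔ Δu p ⊔ Submodule.span ℝ {p.2} = ⊤
  indep : ∀ p ∈ B, Δs p ⊓ Δu p = ⊥
  invs : ∀ t : ℝ, ∀ p ∈ B, ∀ v ∈ Δs p, P.psiE t p v ∈ Δs (P.phiSharp t p)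
  invu : ∀ t : ℝ, ∀ p ∈ B, ∀ v ∈ Δu p, P.psiE t p v ∈ Δu (P.phiSharp t p)
  idx : ℕ
  hidx : ∀ p ∈ B, Module.finrank ℝ (Δs p) = idx
  Cdom : ℝ
  lamdom : ℝ
  hCdom : 1 ≤ Cdom
  hlamdom : 0 < lamdom
  dom : ∀ t ≥ (0:ℝ), ∀ p ∈ B, ∀ u ∈ Δs p, ∀ v ∈ Δu (P.phiSharp t p),
    ‖P.psiE t p u‖ * ‖P.psiE (-t) (P.phiSharp t p) v‖ ≤
      Cdom * Real.exp (-lamdom * t) * (‖u‖ * ‖v‖)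
  Splus : Finset E
  Sminus : Finset E
  hSp : ↑Splus ⊆ {σ ∈ Λ | P.X σ = 0}
  hSm : ↑Sminus ⊆ {σ ∈ Λ | P.X σ = 0}
  h : E → E × E → ℝ → ℝ
  hpos : ∀ σ p t, 0 < h σ p t
  hcoc : ∀ σ : E, (σ ∈ Splus ∨ σ ∈ Sminus) → ∀ p ∈ B, ∀ t s : ℝ,
    h σ p (t + s) = h σ p t * h σ (P.phiSharp t p) s
  C : ℝ
  lam : ℝ
  hC : 1 ≤ C
  hlam : 0 < lam
  contr_s : ∀ t ≥ (0:ℝ), ∀ p ∈ B, ∀ v ∈ Δs p,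
    (∏ σ ∈ Splus, h σ p t) * ‖P.psiE t p v‖ ≤ C * Real.exp (-lam * t) * ‖v‖
  contr_u : ∀ t ≥ (0:ℝ), ∀ p ∈ B, ∀ v ∈ Δu p,
    (∏ σ ∈ Sminus, h σ p (-t)) * ‖P.psiE (-t) p v‖ ≤ C * Real.exp (-lam * t) * ‖v‖

section AuxStmt4

open Filter Topology Set

variable {E : Type*} [NormedAddCommGroup E] [InnerProductSpace ℝ E] [FiniteDimensional ℝ E]

/-- Grönwall-type uniqueness: a curve starting at `σ` whose velocity is controlled by
the distance to `σ` near `σ` stays at `σ` for positive times. -/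
lemma stmt4_gronwall_zero (g : ℝ → E) (σ : E) (v : ℝ → E) (K r : ℝ) (hr : 0 < r)
    (hg0 : g 0 = σ) (hcont : Continuous g) (hder : ∀ t, HasDerivAt g (v t) t)
    (hb : ∀ t, dist (g t) σ ≤ r → ‖v t‖ ≤ K * ‖g t - σ‖) :
    ∀ t ≥ (0:ℝ), g t = σ := by
  intro t₁ ht₁
  by_contra hne
  have hu : Continuous fun t => ‖g t - σ‖ := (hcont.sub continuous_const).norm
  have hu₁ : 0 < ‖g t₁ - σ‖ := by
    simpa [norm_pos_iff, sub_eq_zero] using hne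
  set c : ℝ := min r ‖g t₁ - σ‖ / 2 with hc
  have hc0 : 0 < c := by positivity
  have hcr : c ≤ r := by
    have : min r ‖g t₁ - σ‖ ≤ r := min_le_left _ _
    linarith
  have hct₁ : c ≤ ‖g t₁ - σ‖ := by
    have : min r ‖g t₁ - σ‖ ≤ ‖g t₁ - σ‖ := min_le_right _ _
    linarith
  set A : Set ℝ := {t ∈ Icc 0 t₁ | c ≤ ‖g t - σ‖} with hA
  have hAne : A.Nonempty := ⟨t₁, ⟨ht₁, le_refl _⟩, hct₁⟩
  have hAclosed : IsClosed A := by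
    apply IsClosed.inter isClosed_Icc
    exact isClosed_le continuous_const hu
  have hAbdd : BddBelow A := ⟨0, fun t ht => ht.1.1⟩
  set τ := sInf A with hτ
  have hτA : τ ∈ A := hAclosed.csInf_mem hAne hAbdd
  have hτ0 : 0 ≤ τ := hτA.1.1
  have hτlt : ∀ s, 0 ≤ s → s < τ → ‖g s - σ‖ < c := by
    intro s hs0 hsτ
    by_contra hle
    push_neg at hle
    have : s ∈ A := ⟨⟨hs0, hsτ.le.trans hτA.1.2⟩, hle⟩
    exact absurd (csInf_le hAbdd this) (not_le.2 hsτ)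
  -- Grönwall on [0, τ]
  have hgron := norm_le_gronwallBound_of_norm_deriv_right_le
    (f := fun t => g t - σ) (f' := v) (δ := 0) (K := K) (ε := 0) (a := 0) (b := τ)
    ((hcont.sub continuous_const).continuousOn)
    (fun t _ => ((hder t).sub_const σ).hasDerivWithinAt)
    (by simp [hg0]) ?_ τ ⟨hτ0, le_refl _⟩
  · rw [gronwallBound_ε0] at hgron
    have : ‖g τ - σ‖ ≤ 0 := by simpa using hgron
    have := hτA.2
    linarith
  · intro t ht
    have hlt : ‖g t - σ‖ < c := hτlt t ht.1 ht.2
    have : dist (g t) σ ≤ r := by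
      rw [dist_eq_norm]; linarith
    simpa using hb t this
/-- a hyperbolic (indeed any) singularity is a fixed point of the flow -/
lemma stmt4_fix_sing (P : FlowPkg E) {σ : E} (h0 : P.X σ = 0) : ∀ t : ℝ, P.φ t σ = σ := by
  obtain ⟨c, hc⟩ := (P.deriv_X σ).isBigO_sub.bound
  rw [Metric.eventually_nhds_iff] at hc
  obtain ⟨r, hr, hball⟩ := hc
  have hbX : ∀ y : E, dist y σ ≤ r / 2 → ‖P.X y‖ ≤ c * ‖y - σ‖ := by
    intro y hy
    have : dist y σ < r := lt_of_le_of_lt hy (by linarith)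
    simpa [h0] using hball this
  have hfwd : ∀ t ≥ (0:ℝ), P.φ t σ = σ := by
    refine stmt4_gronwall_zero (fun t => P.φ t σ) σ (fun t => P.X (P.φ t σ)) c (r/2)
      (by linarith) (P.flow_zero σ)
      (P.contφ.comp (continuous_id.prodMk continuous_const))
      (fun t => P.deriv_time t σ) ?_
    intro t ht
    exact hbX _ ht
  have hbwd : ∀ t ≥ (0:ℝ), P.φ (-t) σ = σ := by
    refine stmt4_gronwall_zero (fun t => P.φ (-t) σ) σ
      (fun t => (-1 : ℝ) • P.X (P.φ (-t) σ)) c (r/2) (by linarith)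
      (by simpa using P.flow_zero σ)
      (P.contφ.comp (continuous_neg.prodMk continuous_const))
      (fun t => (P.deriv_time (-t) σ).scomp t (by simpa using (hasDerivAt_neg t))) ?_
    intro t ht
    have := hbX _ ht
    simpa using this
  intro t
  rcases le_or_gt 0 t with h | h
  · exact hfwd t h
  · have := hbwd (-t) (by linarith)
    simpa using this

/-- group law for the linearized flow at a fixed point -/
lemma stmt4_Dphi_add (P : FlowPkg E) {σ : E} (hfix : ∀ t : ℝ, P.φ t σ = σ) (s t : ℝ) :
    P.Dφ (s + t) σ = (P.Dφ s σ).comp (P.Dφ t σ) := by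
  have h1 : HasFDerivAt (P.φ (s + t)) (P.Dφ (s + t) σ) σ := P.deriv_space _ _
  have h2 : HasFDerivAt (fun x => P.φ s (P.φ t x)) ((P.Dφ s σ).comp (P.Dφ t σ)) σ := by
    have hout : HasFDerivAt (P.φ s) (P.Dφ s σ) (P.φ t σ) := by
      rw [hfix t]; exact P.deriv_space _ _
    exact hout.comp σ (P.deriv_space t σ)
  have heq : P.φ (s + t) = fun x => P.φ s (P.φ t x) := funext (P.flow_add s t)
  rw [heq] at h1
  exact h1.unique h2

lemma stmt4_Dphi_zero (P : FlowPkg E) (σ : E) :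
    P.Dφ 0 σ = ContinuousLinearMap.id ℝ E := by
  have h1 : HasFDerivAt (P.φ 0) (P.Dφ 0 σ) σ := P.deriv_space _ _
  have heq : P.φ 0 = fun x : E => x := funext (P.flow_zero)
  rw [heq] at h1
  exact h1.unique (hasFDerivAt_id σ)

end AuxStmt4
section AuxStmt4b
set_option linter.unusedSectionVars false
open Filter Topology Set

variable {E : Type*} [NormedAddCommGroup E] [InnerProductSpace ℝ E] [FiniteDimensional ℝ E]

/-- pure sequence dichotomy for hyperbolic estimates -/
lemma stmt4_dich (a b : ℕ → ℝ) (M : ℝ)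
    (ha0 : ∀ n, 0 ≤ a n) (hb0 : ∀ n, 0 ≤ b n) (hM : ∀ n, b n ≤ M)
    (hA : ∀ n, a (n+1) ≤ 4⁻¹ * a n + 4⁻¹ * max (a n) (b n))
    (hB : ∀ n, 4 * b n - 4⁻¹ * max (a n) (b n) ≤ b (n+1)) :
    ∀ n, b n ≤ a n := by
  by_contra hcon
  push_neg at hcon
  obtain ⟨m, hm⟩ := hcon
  have hbm : 0 < b m := lt_of_le_of_lt (ha0 m) hm
  have hgrow : ∀ k : ℕ, a (m + k) < b (m + k) ∧ 3 ^ k * b m ≤ b (m + k) := by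
    intro k
    induction k with
    | zero => exact ⟨hm, by simp⟩
    | succ k ih =>
      obtain ⟨ih1, ih2⟩ := ih
      have hmax : max (a (m+k)) (b (m+k)) = b (m+k) := max_eq_right ih1.le
      have h1 := hA (m+k)
      have h2 := hB (m+k)
      rw [hmax] at h1 h2
      have hbN : 0 < b (m+k) := lt_of_le_of_lt (ha0 _) ih1
      have hstep : 3 * b (m+k) ≤ b (m+k+1) := by linarith
      have h3 : 3 ^ (k+1) * b m = 3 * (3 ^ k * b m) := by ring
      constructor
      · show a (m+k+1) < b (m+k+1)
        have : a (m+k+1) ≤ 2⁻¹ * b (m+k) := by linarith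
        linarith
      · show 3 ^ (k+1) * b m ≤ b (m+k+1)
        rw [h3]
        nlinarith
  obtain ⟨k, hk⟩ := pow_unbounded_of_one_lt (M / b m) (by norm_num : (1:ℝ) < 3)
  have h1 := (hgrow k).2
  have h2 := hM (m+k)
  rw [div_lt_iff₀ hbm] at hk
  linarith

/-- Core hyperbolic fixed point lemma. -/
lemma stmt4_hyp_core {Es Eu : Submodule ℝ E} (hc : IsCompl Es Eu)
    (f : E → E) (σ : E) (L : E →L[ℝ] E)
    (hdf : HasFDerivAt f L σ) (hfσ : f σ = σ)
    (hS : ∀ v ∈ Es, ‖L v‖ ≤ 4⁻¹ * ‖v‖)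
    (hU : ∀ v ∈ Eu, 4 * ‖v‖ ≤ ‖L v‖)
    (hIS : ∀ v ∈ Es, L v ∈ Es) (hIU : ∀ v ∈ Eu, L v ∈ Eu) :
    ∃ ρ > (0:ℝ), ∀ x : E, (∀ n : ℕ, dist (f^[n] x) σ ≤ ρ) →
      Tendsto (fun n => f^[n] x) atTop (𝓝 σ) := by
  classical
  obtain ⟨prs, pru, hadd, hmem_s, hmem_u, hprs_s, hprs_u, hpru_u, hpru_s⟩ :
      ∃ prs pru : E →ₗ[ℝ] E, (∀ y : E, prs y + pru y = y) ∧ (∀ y, prs y ∈ Es) ∧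
        (∀ y, pru y ∈ Eu) ∧ (∀ v ∈ Es, prs v = v) ∧ (∀ v ∈ Eu, prs v = 0) ∧
        (∀ v ∈ Eu, pru v = v) ∧ (∀ v ∈ Es, pru v = 0) := by
    refine ⟨Es.subtype.comp (Es.projectionOnto Eu hc),
      Eu.subtype.comp (Eu.projectionOnto Es hc.symm),
      fun y => Submodule.projection_add_projection_eq_self hc y,
      fun y => Submodule.coe_mem _, fun y => Submodule.coe_mem _, ?_, ?_, ?_, ?_⟩
    · intro v hv
      exact congrArg (Es.subtype) (Es.projectionOnto_apply_left hc ⟨v, hv⟩)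
    · intro v hv
      simp [hv]
    · intro v hv
      exact congrArg (Eu.subtype) (Eu.projectionOnto_apply_left hc.symm ⟨v, hv⟩)
    · intro v hv
      simp [hv]
  have hcomm_s : ∀ y : E, prs (L y) = L (prs y) := by
    intro y
    conv_lhs => rw [← hadd y]
    rw [map_add, map_add, hprs_s _ (hIS _ (hmem_s y)), hprs_u _ (hIU _ (hmem_u y)), add_zero]
  have hcomm_u : ∀ y : E, pru (L y) = L (pru y) := by
    intro y
    conv_lhs => rw [← hadd y]
    rw [map_add, map_add, hpru_s _ (hIS _ (hmem_s y)), hpru_u _ (hIU _ (hmem_u y)), zero_add]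
  obtain ⟨cs, hcs0, hbs⟩ : ∃ c : ℝ, 0 < c ∧ ∀ y : E, ‖prs y‖ ≤ c * ‖y‖ := by
    refine ⟨‖LinearMap.toContinuousLinearMap prs‖ + 1, by positivity, fun y => ?_⟩
    have := (LinearMap.toContinuousLinearMap prs).le_opNorm y
    simp only [LinearMap.coe_toContinuousLinearMap'] at this
    nlinarith [norm_nonneg y]
  obtain ⟨cu, hcu0, hbu⟩ : ∃ c : ℝ, 0 < c ∧ ∀ y : E, ‖pru y‖ ≤ c * ‖y‖ := by
    refine ⟨‖LinearMap.toContinuousLinearMap pru‖ + 1, by positivity, fun y => ?_⟩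
    have := (LinearMap.toContinuousLinearMap pru).le_opNorm y
    simp only [LinearMap.coe_toContinuousLinearMap'] at this
    nlinarith [norm_nonneg y]
  set c := max cs cu with hc'
  have hc0 : 0 < c := lt_of_lt_of_le hcs0 (le_max_left _ _)
  set η : ℝ := (8 * c)⁻¹ with hη
  have hη0 : 0 < η := by positivity
  have hηc : c * η * 2 = 4⁻¹ := by
    rw [hη]; field_simp; ring
  have hlo := (hdf.isLittleO).def hη0
  rw [Metric.eventually_nhds_iff] at hlo
  obtain ⟨ρ₀, hρ₀, hball⟩ := hlo
  refine ⟨ρ₀ / 2, by positivity, ?_⟩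
  intro x hx
  have hynorm : ∀ n : ℕ, ‖f^[n] x - σ‖ ≤ ρ₀ / 2 := by
    intro n
    have := hx n; rwa [dist_eq_norm] at this
  have hrem : ∀ n : ℕ, ‖(f^[n+1] x - σ) - L (f^[n] x - σ)‖ ≤ η * ‖f^[n] x - σ‖ := by
    intro n
    have hd : dist (f^[n] x) σ < ρ₀ := lt_of_le_of_lt (hx n) (by linarith)
    have h1 := hball hd
    rw [hfσ] at h1
    have h2 : f^[n+1] x = f (f^[n] x) := Function.iterate_succ_apply' f n x
    rw [h2]
    exact h1
  -- the sequences
  set a : ℕ → ℝ := fun n => ‖prs (f^[n] x - σ)‖ with ha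
  set b : ℕ → ℝ := fun n => ‖pru (f^[n] x - σ)‖ with hb
  have ha0 : ∀ n, 0 ≤ a n := fun n => norm_nonneg _
  have hb0 : ∀ n, 0 ≤ b n := fun n => norm_nonneg _
  have hyab : ∀ n, ‖f^[n] x - σ‖ ≤ a n + b n := by
    intro n
    calc ‖f^[n] x - σ‖ = ‖prs (f^[n] x - σ) + pru (f^[n] x - σ)‖ := by rw [hadd]
      _ ≤ a n + b n := norm_add_le _ _
  have hymax : ∀ n, c * (η * ‖f^[n] x - σ‖) ≤ 4⁻¹ * max (a n) (b n) := by
    intro n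
    have h1 : ‖f^[n] x - σ‖ ≤ 2 * max (a n) (b n) := by
      have := hyab n
      have h2 : a n ≤ max (a n) (b n) := le_max_left _ _
      have h3 : b n ≤ max (a n) (b n) := le_max_right _ _
      linarith
    calc c * (η * ‖f^[n] x - σ‖) ≤ c * (η * (2 * max (a n) (b n))) := by
          gcongr
      _ = (c * η * 2) * max (a n) (b n) := by ring
      _ = 4⁻¹ * max (a n) (b n) := by rw [hηc]
  have hA : ∀ n, a (n+1) ≤ 4⁻¹ * a n + 4⁻¹ * max (a n) (b n) := by
    intro n
    have hsplit : prs (f^[n+1] x - σ) =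
        L (prs (f^[n] x - σ)) + prs ((f^[n+1] x - σ) - L (f^[n] x - σ)) := by
      have h0 : prs ((f^[n+1] x - σ) - L (f^[n] x - σ))
          = prs (f^[n+1] x - σ) - prs (L (f^[n] x - σ)) := map_sub _ _ _
      rw [h0, hcomm_s]; abel
    have h1 : a (n+1) ≤ ‖L (prs (f^[n] x - σ))‖ + ‖prs ((f^[n+1] x - σ) - L (f^[n] x - σ))‖ := by
      rw [ha]
      simp only []
      rw [hsplit]
      exact norm_add_le _ _
    have h2 : ‖L (prs (f^[n] x - σ))‖ ≤ 4⁻¹ * a n := hS _ (hmem_s _)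
    have h3 : ‖prs ((f^[n+1] x - σ) - L (f^[n] x - σ))‖ ≤ cs * (η * ‖f^[n] x - σ‖) := by
      calc ‖prs ((f^[n+1] x - σ) - L (f^[n] x - σ))‖
          ≤ cs * ‖(f^[n+1] x - σ) - L (f^[n] x - σ)‖ := hbs _
        _ ≤ cs * (η * ‖f^[n] x - σ‖) := by gcongr; exact hrem n
    have h4 : cs * (η * ‖f^[n] x - σ‖) ≤ c * (η * ‖f^[n] x - σ‖) := by
      have : (0:ℝ) ≤ η * ‖f^[n] x - σ‖ := by positivity
      have hcsc : cs ≤ c := le_max_left _ _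
      nlinarith
    have h5 := hymax n
    linarith
  have hB : ∀ n, 4 * b n - 4⁻¹ * max (a n) (b n) ≤ b (n+1) := by
    intro n
    have hsplit : pru (f^[n+1] x - σ) =
        L (pru (f^[n] x - σ)) + pru ((f^[n+1] x - σ) - L (f^[n] x - σ)) := by
      have h0 : pru ((f^[n+1] x - σ) - L (f^[n] x - σ))
          = pru (f^[n+1] x - σ) - pru (L (f^[n] x - σ)) := map_sub _ _ _
      rw [h0, hcomm_u]; abel
    have h1 : ‖L (pru (f^[n] x - σ))‖ ≤ b (n+1) + ‖pru ((f^[n+1] x - σ) - L (f^[n] x - σ))‖ := by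
      have heq : L (pru (f^[n] x - σ)) =
          pru (f^[n+1] x - σ) - pru ((f^[n+1] x - σ) - L (f^[n] x - σ)) := by
        rw [hsplit]; abel
      rw [heq]
      exact norm_sub_le _ _
    have h2 : 4 * b n ≤ ‖L (pru (f^[n] x - σ))‖ := hU _ (hmem_u _)
    have h3 : ‖pru ((f^[n+1] x - σ) - L (f^[n] x - σ))‖ ≤ cu * (η * ‖f^[n] x - σ‖) := by
      calc ‖pru ((f^[n+1] x - σ) - L (f^[n] x - σ))‖
          ≤ cu * ‖(f^[n+1] x - σ) - L (f^[n] x - σ)‖ := hbu _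
        _ ≤ cu * (η * ‖f^[n] x - σ‖) := by gcongr; exact hrem n
    have h4 : cu * (η * ‖f^[n] x - σ‖) ≤ c * (η * ‖f^[n] x - σ‖) := by
      have : (0:ℝ) ≤ η * ‖f^[n] x - σ‖ := by positivity
      have hcuc : cu ≤ c := le_max_right _ _
      nlinarith
    have h5 := hymax n
    linarith
  have hMb : ∀ n, b n ≤ cu * (ρ₀ / 2) := by
    intro n
    calc b n ≤ cu * ‖f^[n] x - σ‖ := hbu _
      _ ≤ cu * (ρ₀ / 2) := by gcongr; exact hynorm n
  have hmono : ∀ n, b n ≤ a n := stmt4_dich a b (cu * (ρ₀/2)) ha0 hb0 hMb hA hB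
  have hdecay : ∀ n, a (n+1) ≤ 2⁻¹ * a n := by
    intro n
    have h1 := hA n
    rw [max_eq_left (hmono n)] at h1
    linarith
  have hgeo : ∀ n, a n ≤ (2⁻¹) ^ n * a 0 := by
    intro n
    induction n with
    | zero => simp
    | succ n ih =>
      calc a (n+1) ≤ 2⁻¹ * a n := hdecay n
        _ ≤ 2⁻¹ * ((2⁻¹)^n * a 0) := by
            have : (0:ℝ) < 2⁻¹ := by norm_num
            nlinarith
        _ = (2⁻¹)^(n+1) * a 0 := by ring
  have hlim : Tendsto (fun n : ℕ => ‖f^[n] x - σ‖) atTop (𝓝 0) := by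
    apply squeeze_zero (fun n => norm_nonneg _) (g := fun n => 2 * ((2⁻¹)^n * a 0))
    · intro n
      have h1 := hyab n
      have h2 := hmono n
      have h3 := hgeo n
      linarith
    · have h := (tendsto_pow_atTop_nhds_zero_of_lt_one (by norm_num : (0:ℝ) ≤ 2⁻¹)
        (by norm_num : (2:ℝ)⁻¹ < 1))
      have := (h.mul_const (a 0)).const_mul 2
      simpa using this
  rw [tendsto_iff_dist_tendsto_zero]
  simpa [dist_eq_norm] using hlim

end AuxStmt4b
section AuxStmt4c
set_option linter.unusedSectionVars false
open Filter Topology Set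

variable {E : Type*} [NormedAddCommGroup E] [InnerProductSpace ℝ E] [FiniteDimensional ℝ E]

lemma stmt4_near_fix (P : FlowPkg E) {σ : E} (hfix : ∀ t : ℝ, P.φ t σ = σ) (N : ℝ)
    {ε' : ℝ} (hε' : 0 < ε') :
    ∃ δ' > (0:ℝ), ∀ y : E, dist y σ < δ' → ∀ r ∈ Icc (-N) N, dist (P.φ r y) σ < ε' := by
  have hopen : IsOpen ((fun p : ℝ × E => P.φ p.1 p.2) ⁻¹' (Metric.ball σ ε')) :=
    Metric.isOpen_ball.preimage P.contφ
  have hsub : (Icc (-N) N) ×ˢ ({σ} : Set E) ⊆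
      (fun p : ℝ × E => P.φ p.1 p.2) ⁻¹' (Metric.ball σ ε') := by
    rintro ⟨r, y⟩ ⟨hr, hy⟩
    simp only [mem_singleton_iff] at hy
    subst hy
    simp [Set.mem_preimage, hfix r, Metric.mem_ball, hε']
  obtain ⟨u, v, hu, hv, hIu, hIv, huv⟩ :=
    generalized_tube_lemma isCompact_Icc isCompact_singleton hopen hsub
  have hσv : σ ∈ v := hIv rfl
  obtain ⟨δ', hδ', hball⟩ := Metric.isOpen_iff.1 hv σ hσv
  refine ⟨δ', hδ', fun y hy r hr => ?_⟩
  have : (r, y) ∈ u ×ˢ v := ⟨hIu hr, hball hy⟩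
  exact huv this

lemma stmt4_upgrade_fwd (P : FlowPkg E) {σ : E} (hfix : ∀ t : ℝ, P.φ t σ = σ)
    {N : ℝ} (hN : 0 < N) (w : E)
    (hd : Tendsto (fun n : ℕ => P.φ (n * N) w) atTop (𝓝 σ)) :
    Tendsto (fun t : ℝ => P.φ t w) atTop (𝓝 σ) := by
  rw [Metric.tendsto_nhds]
  intro ε hε
  obtain ⟨δ', hδ', hnear⟩ := stmt4_near_fix P hfix N hε
  obtain ⟨n₀, hn₀⟩ := Metric.tendsto_atTop.1 hd δ' hδ'
  rw [eventually_atTop]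
  refine ⟨(n₀ + 1) * N, fun t ht => ?_⟩
  have ht0 : 0 ≤ t := le_trans (by positivity) ht
  set n : ℕ := ⌊t / N⌋₊ with hn
  have hdiv0 : 0 ≤ t / N := div_nonneg ht0 hN.le
  have hge : n₀ + 1 ≤ n := by
    apply Nat.le_floor
    rw [le_div_iff₀ hN]
    push_cast
    linarith
  have hle : (n : ℝ) * N ≤ t := by
    have := Nat.floor_le hdiv0
    rw [← le_div_iff₀ hN]
    exact this
  have hlt : t < ((n : ℝ) + 1) * N := by
    have := Nat.lt_floor_add_one (t / N)
    rw [div_lt_iff₀ hN] at this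
    exact this
  have heq : P.φ t w = P.φ (t - n * N) (P.φ ((n : ℝ) * N) w) := by
    rw [← P.flow_add]; congr 1; ring
  rw [heq]
  refine hnear _ (hn₀ n (by omega)) _ ⟨by linarith, by linarith⟩

lemma stmt4_upgrade_bwd (P : FlowPkg E) {σ : E} (hfix : ∀ t : ℝ, P.φ t σ = σ)
    {N : ℝ} (hN : 0 < N) (w : E)
    (hd : Tendsto (fun n : ℕ => P.φ (-(n * N)) w) atTop (𝓝 σ)) :
    Tendsto (fun t : ℝ => P.φ t w) atBot (𝓝 σ) := by
  rw [Metric.tendsto_nhds]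
  intro ε hε
  obtain ⟨δ', hδ', hnear⟩ := stmt4_near_fix P hfix N hε
  obtain ⟨n₀, hn₀⟩ := Metric.tendsto_atTop.1 hd δ' hδ'
  rw [eventually_atBot]
  refine ⟨-((n₀ + 1) * N), fun t ht => ?_⟩
  have ht0 : 0 ≤ -t := by
    have : (0:ℝ) ≤ (n₀ + 1) * N := by positivity
    linarith
  set n : ℕ := ⌊(-t) / N⌋₊ with hn
  have hdiv0 : 0 ≤ (-t) / N := div_nonneg ht0 hN.le
  have hge : n₀ + 1 ≤ n := by
    apply Nat.le_floor
    rw [le_div_iff₀ hN]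
    push_cast
    linarith
  have hle : (n : ℝ) * N ≤ -t := by
    have := Nat.floor_le hdiv0
    rw [← le_div_iff₀ hN]
    exact this
  have hlt : -t < ((n : ℝ) + 1) * N := by
    have := Nat.lt_floor_add_one ((-t) / N)
    rw [div_lt_iff₀ hN] at this
    exact this
  have heq : P.φ t w = P.φ (t + n * N) (P.φ (-((n : ℝ) * N)) w) := by
    rw [← P.flow_add]; congr 1; ring
  rw [heq]
  refine hnear _ (hn₀ n (by omega)) _ ⟨by linarith, by linarith⟩

lemma stmt4_pick_N (C lam : ℝ) (hC : 1 ≤ C) (hlam : 0 < lam) :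
    ∃ N : ℕ, 0 < N ∧ C * Real.exp (-lam * N) ≤ 4⁻¹ := by
  refine ⟨⌈Real.log (4 * C) / lam⌉₊ + 1, Nat.succ_pos _, ?_⟩
  set N : ℕ := ⌈Real.log (4 * C) / lam⌉₊ + 1 with hN
  have hlog : Real.log (4 * C) ≤ lam * N := by
    have h1 : Real.log (4 * C) / lam ≤ (N : ℝ) := by
      have := Nat.le_ceil (Real.log (4 * C) / lam)
      have h2 : ((⌈Real.log (4 * C) / lam⌉₊ : ℝ)) ≤ (N : ℝ) := by
        rw [hN]; push_cast; linarith
      linarith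
    rw [div_le_iff₀ hlam] at h1
    linarith
  have h4C : (0:ℝ) < 4 * C := by linarith
  have hexp : 4 * C ≤ Real.exp (lam * N) := by
    calc 4 * C = Real.exp (Real.log (4 * C)) := (Real.exp_log h4C).symm
      _ ≤ Real.exp (lam * N) := Real.exp_le_exp.2 hlog
  have hconv : Real.exp (-lam * (N:ℝ)) = (Real.exp (lam * N))⁻¹ := by
    rw [← Real.exp_neg]; ring_nf
  rw [hconv, inv_eq_one_div, mul_one_div, div_le_iff₀ (Real.exp_pos _)]
  have : 4⁻¹ * (4 * C) ≤ 4⁻¹ * Real.exp (lam * N) := by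
    apply mul_le_mul_of_nonneg_left hexp
    norm_num
  linarith

lemma stmt4_ball_ws (P : FlowPkg E) {σ : E} (hs : HypSing P σ)
    (hfix : ∀ t : ℝ, P.φ t σ = σ) :
    ∃ ρ > (0:ℝ), ∀ w : E, (∀ r : ℝ, 0 ≤ r → dist (P.φ r w) σ ≤ ρ) →
      Tendsto (fun t : ℝ => P.φ t w) atTop (𝓝 σ) := by
  obtain ⟨N, hNpos, hN4⟩ := stmt4_pick_N hs.C hs.lam hs.hC hs.hlam
  have hNr : (0:ℝ) < N := by exact_mod_cast hNpos
  set L : E →L[ℝ] E := P.Dφ (N : ℝ) σ with hL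
  have hid : ∀ v : E, P.Dφ (-(N:ℝ)) σ (L v) = v := by
    intro v
    have h1 : P.Dφ ((-(N:ℝ)) + N) σ = (P.Dφ (-(N:ℝ)) σ).comp (P.Dφ (N:ℝ) σ) :=
      stmt4_Dphi_add P hfix _ _
    have h2 : (-(N:ℝ)) + N = 0 := by ring
    rw [h2, stmt4_Dphi_zero] at h1
    have := congrArg (fun (T : E →L[ℝ] E) => T v) h1
    simpa [hL] using this.symm
  have hS : ∀ v ∈ hs.Es, ‖L v‖ ≤ 4⁻¹ * ‖v‖ := by
    intro v hv
    have h1 := hs.contr N (by positivity) v hv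
    have h2 : hs.C * Real.exp (-hs.lam * N) * ‖v‖ ≤ 4⁻¹ * ‖v‖ :=
      mul_le_mul_of_nonneg_right hN4 (norm_nonneg v)
    exact le_trans h1 h2
  have hU : ∀ v ∈ hs.Eu, 4 * ‖v‖ ≤ ‖L v‖ := by
    intro v hv
    have h1 := hs.expand N (by positivity) (L v) (hs.invu N v hv)
    rw [hid v] at h1
    have h2 : hs.C * Real.exp (-hs.lam * N) * ‖L v‖ ≤ 4⁻¹ * ‖L v‖ :=
      mul_le_mul_of_nonneg_right hN4 (norm_nonneg _)
    have : ‖v‖ ≤ 4⁻¹ * ‖L v‖ := le_trans h1 h2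
    linarith
  obtain ⟨ρ, hρ, hcore⟩ := stmt4_hyp_core hs.compl (P.φ (N : ℝ)) σ L
    (P.deriv_space _ _) (hfix _) hS hU (fun v hv => hs.invs N v hv)
    (fun v hv => hs.invu N v hv)
  refine ⟨ρ, hρ, fun w hw => ?_⟩
  have hiter : ∀ n : ℕ, (P.φ (N : ℝ))^[n] w = P.φ ((n : ℝ) * N) w := by
    intro n
    induction n with
    | zero => simp [P.flow_zero]
    | succ n ih =>
      rw [Function.iterate_succ_apply', ih, ← P.flow_add]
      congr 1
      push_cast
      ring
  have hd : Tendsto (fun n : ℕ => (P.φ (N : ℝ))^[n] w) atTop (𝓝 σ) := by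
    apply hcore
    intro n
    rw [hiter]
    exact hw _ (by positivity)
  have hd' : Tendsto (fun n : ℕ => P.φ ((n:ℝ) * N) w) atTop (𝓝 σ) := by
    have heq : (fun n : ℕ => (P.φ (N:ℝ))^[n] w) = fun n : ℕ => P.φ ((n:ℝ) * N) w :=
      funext hiter
    rwa [heq] at hd
  exact stmt4_upgrade_fwd P hfix hNr w hd'

lemma stmt4_ball_wu (P : FlowPkg E) {σ : E} (hs : HypSing P σ)
    (hfix : ∀ t : ℝ, P.φ t σ = σ) :
    ∃ ρ > (0:ℝ), ∀ w : E, (∀ r : ℝ, 0 ≤ r → dist (P.φ (-r) w) σ ≤ ρ) →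
      Tendsto (fun t : ℝ => P.φ t w) atBot (𝓝 σ) := by
  obtain ⟨N, hNpos, hN4⟩ := stmt4_pick_N hs.C hs.lam hs.hC hs.hlam
  have hNr : (0:ℝ) < N := by exact_mod_cast hNpos
  set L : E →L[ℝ] E := P.Dφ (-(N : ℝ)) σ with hL
  have hid : ∀ v : E, P.Dφ (N:ℝ) σ (L v) = v := by
    intro v
    have h1 : P.Dφ ((N:ℝ) + (-(N:ℝ))) σ = (P.Dφ (N:ℝ) σ).comp (P.Dφ (-(N:ℝ)) σ) :=
      stmt4_Dphi_add P hfix _ _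
    have h2 : (N:ℝ) + (-(N:ℝ)) = 0 := by ring
    rw [h2, stmt4_Dphi_zero] at h1
    have := congrArg (fun (T : E →L[ℝ] E) => T v) h1
    simpa [hL] using this.symm
  have hS : ∀ v ∈ hs.Eu, ‖L v‖ ≤ 4⁻¹ * ‖v‖ := by
    intro v hv
    have h1 := hs.expand N (by positivity) v hv
    have h2 : hs.C * Real.exp (-hs.lam * N) * ‖v‖ ≤ 4⁻¹ * ‖v‖ :=
      mul_le_mul_of_nonneg_right hN4 (norm_nonneg v)
    exact le_trans h1 h2
  have hU : ∀ v ∈ hs.Es, 4 * ‖v‖ ≤ ‖L v‖ := by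
    intro v hv
    have h1 := hs.contr N (by positivity) (L v) (hs.invs (-(N:ℝ)) v hv)
    rw [hid v] at h1
    have h2 : hs.C * Real.exp (-hs.lam * N) * ‖L v‖ ≤ 4⁻¹ * ‖L v‖ :=
      mul_le_mul_of_nonneg_right hN4 (norm_nonneg _)
    have : ‖v‖ ≤ 4⁻¹ * ‖L v‖ := le_trans h1 h2
    linarith
  obtain ⟨ρ, hρ, hcore⟩ := stmt4_hyp_core hs.compl.symm (P.φ (-(N : ℝ))) σ L
    (P.deriv_space _ _) (hfix _) hS hU (fun v hv => hs.invu (-(N:ℝ)) v hv)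
    (fun v hv => hs.invs (-(N:ℝ)) v hv)
  refine ⟨ρ, hρ, fun w hw => ?_⟩
  have hiter : ∀ n : ℕ, (P.φ (-(N : ℝ)))^[n] w = P.φ (-((n : ℝ) * N)) w := by
    intro n
    induction n with
    | zero => simp [P.flow_zero]
    | succ n ih =>
      rw [Function.iterate_succ_apply', ih, ← P.flow_add]
      congr 1
      push_cast
      ring
  have hd : Tendsto (fun n : ℕ => (P.φ (-(N : ℝ)))^[n] w) atTop (𝓝 σ) := by
    apply hcore
    intro n
    rw [hiter]
    exact hw _ (by positivity)
  have hd' : Tendsto (fun n : ℕ => P.φ (-((n:ℝ) * N)) w) atTop (𝓝 σ) := by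
    have heq : (fun n : ℕ => (P.φ (-(N:ℝ)))^[n] w) = fun n : ℕ => P.φ (-((n:ℝ) * N)) w :=
      funext hiter
    rwa [heq] at hd
  exact stmt4_upgrade_bwd P hfix hNr w hd'

end AuxStmt4c
section AuxStmt4d
set_option linter.unusedSectionVars false
open Filter Topology Set

variable {E : Type*} [NormedAddCommGroup E] [InnerProductSpace ℝ E] [FiniteDimensional ℝ E]

/-- accumulated times of a bi-infinite pseudo orbit -/
noncomputable def stmt4_s (T : ℤ → ℝ) : ℤ → ℝ := fun i =>
  (∑ j ∈ Finset.range i.toNat, T j) - ∑ j ∈ Finset.range (-i).toNat, T (-(j:ℤ) - 1)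

lemma stmt4_s_zero (T : ℤ → ℝ) : stmt4_s T 0 = 0 := by simp [stmt4_s]

lemma stmt4_s_rec (T : ℤ → ℝ) (i : ℤ) : stmt4_s T (i+1) = stmt4_s T i + T i := by
  unfold stmt4_s
  rcases le_or_gt 0 i with h | h
  · have h1 : (i+1).toNat = i.toNat + 1 := by omega
    have h2 : (-(i+1)).toNat = 0 := by omega
    have h3 : (-i).toNat = 0 := by omega
    rw [h1, h2, h3, Finset.sum_range_succ]
    have h4 : ((i.toNat : ℤ)) = i := by omega
    rw [h4]
    simp
  · have h1 : (i+1).toNat = 0 := by omega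
    have h2 : i.toNat = 0 := by omega
    have h3 : (-i).toNat = (-(i+1)).toNat + 1 := by omega
    rw [h1, h2, h3, Finset.sum_range_succ]
    have h4 : (-(((-(i+1)).toNat : ℤ)) - 1) = i := by omega
    rw [h4]
    simp

lemma stmt4_s_step (s T : ℤ → ℝ) (hrec : ∀ i, s (i+1) = s i + T i) (hT : ∀ i, 1 ≤ T i) :
    ∀ i j : ℤ, i ≤ j → s i + ((j - i : ℤ) : ℝ) ≤ s j := by
  have key : ∀ (i : ℤ) (k : ℕ), s i + (k : ℝ) ≤ s (i + k) := by
    intro i k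
    induction k with
    | zero => simp
    | succ k ih =>
      have h1 : i + ((k:ℕ)+1 : ℤ) = (i + k) + 1 := by push_cast; ring
      have h2 : (i + ((k+1 : ℕ) : ℤ)) = (i + k) + 1 := by push_cast; ring
      rw [h2, hrec]
      have := hT (i + k)
      push_cast
      linarith
  intro i j hij
  have h1 : j = i + ((j - i).toNat : ℤ) := by omega
  have h2 := key i (j - i).toNat
  rw [← h1] at h2
  have h3 : (((j - i).toNat : ℕ) : ℝ) = ((j - i : ℤ) : ℝ) := by
    have h4 : (((j - i).toNat : ℕ) : ℤ) = j - i := Int.toNat_of_nonneg (by omega)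
    exact_mod_cast congrArg (fun z : ℤ => (z : ℝ)) h4
  rw [h3] at h2
  exact h2

lemma stmt4_exists_index (s T : ℤ → ℝ) (hs0 : s 0 = 0)
    (hrec : ∀ i, s (i+1) = s i + T i) (hT : ∀ i, 1 ≤ T i) (t : ℝ) :
    ∃ i : ℤ, s i ≤ t ∧ t ≤ s (i+1) ∧ ∀ j : ℤ, s j ≤ t → j ≤ i := by
  have hlow : ∀ z : ℤ, 0 ≤ z → (z:ℝ) ≤ s z := by
    intro z hz
    have := stmt4_s_step s T hrec hT 0 z hz
    rw [hs0] at this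
    simpa using this
  have hup : ∀ z : ℤ, z ≤ 0 → s z ≤ (z:ℝ) := by
    intro z hz
    have := stmt4_s_step s T hrec hT z 0 hz
    rw [hs0] at this
    push_cast at this
    linarith
  have hbdd : ∀ z : ℤ, s z ≤ t → z ≤ max 0 ⌈t⌉ := by
    intro z hz
    rcases le_or_gt z 0 with h | h
    · exact le_trans h (le_max_left _ _)
    · have h1 : (z:ℝ) ≤ t := le_trans (hlow z h.le) hz
      have h2 : (z:ℝ) ≤ (⌈t⌉ : ℝ) := le_trans h1 (Int.le_ceil t)
      have h3 : z ≤ ⌈t⌉ := by exact_mod_cast h2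
      exact le_trans h3 (le_max_right _ _)
  have hne : ∃ z : ℤ, s z ≤ t := by
    refine ⟨min ⌊t⌋ 0, ?_⟩
    have h1 : s (min ⌊t⌋ 0) ≤ ((min ⌊t⌋ 0 : ℤ):ℝ) := hup _ (min_le_right _ _)
    have h2 : ((min ⌊t⌋ 0 : ℤ):ℝ) ≤ ((⌊t⌋:ℤ):ℝ) := by exact_mod_cast min_le_left _ _
    have h3 := Int.floor_le t
    linarith
  obtain ⟨i, hi, hmax⟩ := Int.exists_greatest_of_bdd ⟨max 0 ⌈t⌉, hbdd⟩ hne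
  refine ⟨i, hi, ?_, hmax⟩
  by_contra hlt
  push_neg at hlt
  exact absurd (hmax (i+1) hlt.le) (by omega)

/-- main construction: a homoclinic point of `σ` in `S` with orbit in `U` -/
lemma stmt4_aux (P : FlowPkg E) (Λ : Set E) (hΛc : IsCompact Λ) (hinv : P.Invariant Λ)
    (hct : P.ChainTransitive Λ) (σ : E) (hσ : σ ∈ Λ) (hs : HypSing P σ)
    (p : E) (hp : p ∈ Λ) (hpσ : p ≠ σ) (S : Set E)
    (hshS : ∀ ε > (0:ℝ), ∃ δ > (0:ℝ), ∀ (x : ℤ → E) (T s : ℤ → ℝ),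
      (∀ i, x i ∈ Λ) → (∀ i, 1 ≤ T i) →
      (∀ i, dist (P.φ (T i) (x i)) (x (i + 1)) < δ) →
      s 0 = 0 → (∀ i, s (i + 1) = s i + T i) →
      ∃ z ∈ S, P.Shadows ε x s z)
    (U : Set E) (hUo : IsOpen U) (hΛU : Λ ⊆ U) :
    ∃ x ∈ ((P.Ws σ ∩ P.Wu σ) \ {σ}) ∩ S, P.orbit x ⊆ U := by
  classical
  have hfix : ∀ t : ℝ, P.φ t σ = σ := stmt4_fix_sing P hs.zero
  obtain ⟨ρs, hρs, hballs⟩ := stmt4_ball_ws P hs hfix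
  obtain ⟨ρu, hρu, hballu⟩ := stmt4_ball_wu P hs hfix
  obtain ⟨εU, hεU, hthick⟩ := hΛc.exists_thickening_subset_open hUo hΛU
  have hdp : 0 < dist p σ := dist_pos.2 hpσ
  set ε : ℝ := min (min ρs ρu) (min εU (dist p σ / 2)) with hε
  have hε0 : 0 < ε := by
    apply lt_min (lt_min hρs hρu) (lt_min hεU (by linarith))
  have hερs : ε ≤ ρs := le_trans (min_le_left _ _) (min_le_left _ _)
  have hερu : ε ≤ ρu := le_trans (min_le_left _ _) (min_le_right _ _)
  have hεεU : ε ≤ εU := le_trans (min_le_right _ _) (min_le_left _ _)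
  have hεp : ε ≤ dist p σ / 2 := le_trans (min_le_right _ _) (min_le_right _ _)
  obtain ⟨δ, hδ0, hsha⟩ := hshS ε hε0
  obtain ⟨n₁, x0, T0, hn₁, ⟨hT0, hj0⟩, hx0Λ, hx00, hx0n⟩ := hct σ hσ p hp δ hδ0
  obtain ⟨n₂, x1, T1, hn₂, ⟨hT1, hj1⟩, hx1Λ, hx10, hx1n⟩ := hct p hp σ hσ δ hδ0
  set m : ℕ := n₁ + n₂ with hm
  set XX : ℤ → E := fun i =>
    if i ≤ 0 then σ else if i ≤ (n₁:ℤ) then x0 i.toNat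
      else if i ≤ (m:ℤ) then x1 (i - n₁).toNat else σ with hXXdef
  set TT : ℤ → ℝ := fun i =>
    if 0 ≤ i ∧ i < (n₁:ℤ) then T0 i.toNat
      else if (n₁:ℤ) ≤ i ∧ i < (m:ℤ) then T1 (i - n₁).toNat else 1 with hTTdef
  -- value lemmas
  have hXval1 : ∀ i : ℤ, 0 ≤ i → i ≤ (n₁:ℤ) → XX i = x0 i.toNat := by
    intro i h0 h1
    simp only [hXXdef]
    split_ifs with ha
    · rw [show i.toNat = 0 by omega]
      exact hx00.symm
    · rfl
  have hXval2 : ∀ i : ℤ, (n₁:ℤ) ≤ i → i ≤ (m:ℤ) → XX i = x1 (i - n₁).toNat := by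
    intro i h0 h1
    simp only [hXXdef]
    split_ifs with ha hb
    · omega
    · rw [show i.toNat = n₁ by omega, show (i - (n₁:ℤ)).toNat = 0 by omega, hx0n, hx10]
    · rfl
  have hXval3 : ∀ i : ℤ, (m:ℤ) ≤ i → XX i = σ := by
    intro i h0
    simp only [hXXdef]
    split_ifs with ha hb hc
    · rfl
    · omega
    · rw [show (i - (n₁:ℤ)).toNat = n₂ by omega, hx1n]
    · rfl
  have hXval0 : ∀ i : ℤ, i ≤ 0 → XX i = σ := by
    intro i h0
    simp only [hXXdef]
    rw [if_pos h0]
  have hXXΛ : ∀ i, XX i ∈ Λ := by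
    intro i
    simp only [hXXdef]
    split_ifs with ha hb hc
    · exact hσ
    · exact hx0Λ _ (by omega)
    · exact hx1Λ _ (by omega)
    · exact hσ
  have hTT1 : ∀ i, 1 ≤ TT i := by
    intro i
    simp only [hTTdef]
    split_ifs with ha hb
    · exact hT0 _ (by omega)
    · exact hT1 _ (by omega)
    · exact le_refl 1
  have hjump : ∀ i, dist (P.φ (TT i) (XX i)) (XX (i + 1)) < δ := by
    intro i
    by_cases h1 : i < 0
    · have e1 : XX i = σ := hXval0 i (by omega)
      have e2 : XX (i+1) = σ := hXval0 (i+1) (by omega)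
      have e3 : TT i = 1 := by
        simp only [hTTdef]
        rw [if_neg (by omega), if_neg (by omega)]
      rw [e1, e2, e3, hfix]
      simpa using hδ0
    · by_cases h2 : i < (n₁:ℤ)
      · have e3 : TT i = T0 i.toNat := by
          simp only [hTTdef]
          rw [if_pos ⟨by omega, h2⟩]
        have e1 : XX i = x0 i.toNat := hXval1 i (by omega) (by omega)
        have e2 : XX (i+1) = x0 (i.toNat + 1) := by
          rw [hXval1 (i+1) (by omega) (by omega)]
          congr 1
          omega
        rw [e1, e2, e3]
        exact hj0 i.toNat (by omega)
      · by_cases h3 : i < (m:ℤ)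
        · have e3 : TT i = T1 (i - n₁).toNat := by
            simp only [hTTdef]
            rw [if_neg (by omega), if_pos ⟨by omega, h3⟩]
          have e1 : XX i = x1 (i - n₁).toNat := hXval2 i (by omega) (by omega)
          have e2 : XX (i+1) = x1 ((i - (n₁:ℤ)).toNat + 1) := by
            rw [hXval2 (i+1) (by omega) (by omega)]
            congr 1
            omega
          rw [e1, e2, e3]
          exact hj1 _ (by omega)
        · have e3 : TT i = 1 := by
            simp only [hTTdef]
            rw [if_neg (by omega), if_neg (by omega)]
          have e1 : XX i = σ := hXval3 i (by omega)
          have e2 : XX (i+1) = σ := hXval3 (i+1) (by omega)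
          rw [e1, e2, e3, hfix]
          simpa using hδ0
  -- shadowing
  obtain ⟨z, hzS, θ, hθmono, hθsurj, hθshad⟩ := hsha XX TT (stmt4_s TT) hXXΛ hTT1 hjump
    (stmt4_s_zero TT) (stmt4_s_rec TT)
  set ss : ℤ → ℝ := stmt4_s TT with hssdef
  have hrec : ∀ i, ss (i+1) = ss i + TT i := stmt4_s_rec TT
  have hs0 : ss 0 = 0 := stmt4_s_zero TT
  have hidx := stmt4_exists_index ss TT hs0 hrec hTT1
  -- tails
  have hfwdtail : ∀ t : ℝ, ss (m:ℤ) ≤ t → dist σ (P.φ (θ t) z) < ε := by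
    intro t ht
    obtain ⟨i, hi1, hi2, himax⟩ := hidx t
    have him : (m:ℤ) ≤ i := himax (m:ℤ) ht
    have := hθshad i t ⟨hi1, hi2⟩
    rwa [hXval3 i him, hfix] at this
  have hbwdtail : ∀ t : ℝ, t ≤ 0 → dist σ (P.φ (θ t) z) < ε := by
    intro t ht
    rcases lt_or_eq_of_le ht with htlt | hteq
    · obtain ⟨i, hi1, hi2, himax⟩ := hidx t
      have hineg : i ≤ 0 := by
        by_contra hpos
        push_neg at hpos
        have h1 := stmt4_s_step ss TT hrec hTT1 0 i hpos.le
        rw [hs0] at h1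
        have : (0:ℝ) < ((i : ℤ):ℝ) := by exact_mod_cast hpos
        simp at h1
        linarith
      have := hθshad i t ⟨hi1, hi2⟩
      rwa [hXval0 i hineg, hfix] at this
    · subst hteq
      have h1 : ss (-1) ≤ 0 := by
        have := stmt4_s_step ss TT hrec hTT1 (-1) 0 (by omega)
        rw [hs0] at this
        push_cast at this
        linarith
      have h2 : (0:ℝ) ≤ ss (-1 + 1) := by
        rw [show (-1 + 1 : ℤ) = 0 by omega, hs0]
      have := hθshad (-1) 0 ⟨h1, h2⟩
      rwa [hXval0 (-1) (by omega), hfix] at this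
  -- used to show z ≠ σ
  have hmid : dist p (P.φ (θ (ss (n₁:ℤ))) z) < ε := by
    have h1 : ss (n₁:ℤ) ≤ ss ((n₁:ℤ) + 1) := by
      rw [hrec]
      have := hTT1 (n₁:ℤ)
      linarith
    have := hθshad (n₁:ℤ) (ss (n₁:ℤ)) ⟨le_refl _, h1⟩
    rw [sub_self, P.flow_zero] at this
    rwa [hXval1 (n₁:ℤ) (by positivity) (le_refl _), show ((n₁:ℤ)).toNat = n₁ by omega, hx0n]
      at this
  -- orbit in U
  have horbU : ∀ u : ℝ, P.φ u z ∈ U := by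
    intro u
    obtain ⟨t, ht⟩ := hθsurj u
    obtain ⟨i, hi1, hi2, _⟩ := hidx t
    have hmem : P.φ (t - ss i) (XX i) ∈ Λ := hinv _ _ (hXXΛ i)
    have hdist := hθshad i t ⟨hi1, hi2⟩
    rw [ht] at hdist
    apply hthick
    rw [Metric.mem_thickening_iff]
    exact ⟨_, hmem, by rw [dist_comm]; exact lt_of_lt_of_le hdist hεεU⟩
  -- z in the stable set
  have hzWs : Filter.Tendsto (fun t : ℝ => P.φ t z) atTop (𝓝 σ) := by
    set cms : ℝ := θ (ss (m:ℤ)) with hcms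
    have hwball : ∀ r : ℝ, 0 ≤ r → dist (P.φ r (P.φ cms z)) σ ≤ ρs := by
      intro r hr
      have heq : P.φ r (P.φ cms z) = P.φ (r + cms) z := (P.flow_add r cms z).symm
      obtain ⟨t, ht⟩ := hθsurj (r + cms)
      have htm : ss (m:ℤ) ≤ t := by
        rw [← hθmono.le_iff_le (a := ss (m:ℤ)) (b := t)]
        rw [ht]
        linarith
      have := hfwdtail t htm
      rw [ht] at this
      rw [heq, dist_comm]
      exact le_trans this.le hερs
    have hw := hballs (P.φ cms z) hwball
    have heq2 : ∀ t : ℝ, P.φ t z = P.φ (t - cms) (P.φ cms z) := by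
      intro t
      rw [← P.flow_add]
      congr 1
      ring
    rw [funext heq2]
    apply hw.comp
    have : Filter.Tendsto (fun t : ℝ => t + -cms) atTop atTop :=
      Filter.tendsto_atTop_add_const_right atTop (-cms) Filter.tendsto_id
    simpa [sub_eq_add_neg] using this
  have hzWu : Filter.Tendsto (fun t : ℝ => P.φ t z) atBot (𝓝 σ) := by
    set c0 : ℝ := θ 0 with hc0
    have hwball : ∀ r : ℝ, 0 ≤ r → dist (P.φ (-r) (P.φ c0 z)) σ ≤ ρu := by
      intro r hr
      have heq : P.φ (-r) (P.φ c0 z) = P.φ (-r + c0) z := (P.flow_add (-r) c0 z).symm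
      obtain ⟨t, ht⟩ := hθsurj (-r + c0)
      have htm : t ≤ 0 := by
        rw [← hθmono.le_iff_le (a := t) (b := (0:ℝ))]
        rw [ht]
        linarith
      have := hbwdtail t htm
      rw [ht] at this
      rw [heq, dist_comm]
      exact le_trans this.le hερu
    have hw := hballu (P.φ c0 z) hwball
    have heq2 : ∀ t : ℝ, P.φ t z = P.φ (t - c0) (P.φ c0 z) := by
      intro t
      rw [← P.flow_add]
      congr 1
      ring
    rw [funext heq2]
    apply hw.comp
    have : Filter.Tendsto (fun t : ℝ => t + -c0) atBot atBot :=
      Filter.tendsto_atBot_add_const_right atBot (-c0) Filter.tendsto_id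
    simpa [sub_eq_add_neg] using this
  have hzne : z ≠ σ := by
    intro hzσ
    rw [hzσ, hfix] at hmid
    linarith
  refine ⟨z, ⟨⟨⟨hzWs, hzWu⟩, hzne⟩, hzS⟩, ?_⟩
  rintro y ⟨u, rfl⟩
  exact horbU u

end AuxStmt4d
/-- a nontrivial chain transitive set with the shadowing property
containing a hyperbolic singularity `σ` has homoclinic points of `σ` with orbit in
any prescribed neighborhood of `Λ`; with intrinsic shadowing they lie in `Λ`. -/
theorem stmt4 {E : Type*} [NormedAddCommGroup E] [InnerProductSpace ℝ E]
    [FiniteDimensional ℝ E] (P : FlowPkg E) (Λ : Set E)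
    (hΛc : IsCompact Λ) (hinv : P.Invariant Λ)
    (hct : P.ChainTransitive Λ) (hnt : P.NontrivialSet Λ)
    (σ : E) (hσ : σ ∈ Λ) (hs : HypSing P σ) (hsh : P.ShadowingOn Λ) :
    ∀ U : Set E, IsOpen U → Λ ⊆ U →
      (∃ x ∈ (P.Ws σ ∩ P.Wu σ) \ {σ}, P.orbit x ⊆ U) ∧
      (P.IntrinsicShadowingOn Λ →
        ∃ x ∈ ((P.Ws σ ∩ P.Wu σ) \ {σ}) ∩ Λ, P.orbit x ⊆ U) := by
  intro U hUo hΛU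
  have hfix : ∀ t : ℝ, P.φ t σ = σ := stmt4_fix_sing P hs.zero
  obtain ⟨p, hp, hpσ⟩ : ∃ p ∈ Λ, p ≠ σ := by
    by_contra h
    push_neg at h
    apply hnt
    refine ⟨σ, Set.eq_of_subset_of_subset ?_ ?_⟩
    · intro y hy
      exact ⟨0, show P.φ 0 σ = y by rw [P.flow_zero]; exact (h y hy).symm⟩
    · rintro y ⟨t, rfl⟩
      show P.φ t σ ∈ Λ
      rw [hfix]
      exact hσ
  constructor
  · obtain ⟨x, hx1, hx2⟩ := stmt4_aux P Λ hΛc hinv hct σ hσ hs p hp hpσ Set.univ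
      (fun ε hε => by
        obtain ⟨δ, hδ, h⟩ := hsh ε hε
        exact ⟨δ, hδ, fun X T s h1 h2 h3 h4 h5 => by
          obtain ⟨z, hz⟩ := h X T s h1 h2 h3 h4 h5
          exact ⟨z, Set.mem_univ z, hz⟩⟩)
      U hUo hΛU
    exact ⟨x, hx1.1, hx2⟩
  · intro hints
    exact stmt4_aux P Λ hΛc hinv hct σ hσ hs p hp hpσ Λ hints U hUo hΛU
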